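/- Let τ_m > 0, let N be a natural number, let a_n = (2√π/τ_m)·exp(−n²π²/τ_m²), and let z be a complex number such that n²π² ≠ τ_m²z² for all n = 0, 1, …, N (in particular z ≠ 0). Then (1/√π)·∫_0^{τ_m} ( −a_0/2 + ∑_{n=0}^{N} a_n·cos(nπτ/τ_m) )·exp(izτ) dτ = i·(1 − exp(iτ_m z))/(τ_m z) + (i·τ_m²·z/√π)·∑_{n=1}^{N} a_n·((−1)^n·exp(iτ_m z) − 1)/(n²π² − τ_m²z²). -/

import Mathlib

open Real

private lemma exp_int' (c : ℂ) (hc : c ≠ 0) (b : ℝ) :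
    ∫ τ in (0:ℝ)..b, Complex.exp (c * τ) = (Complex.exp (c * b) - 1) / c := by
  rw [integral_exp_mul_complex hc]
  simp

private lemma hdiv' (x y : ℂ) : x / (Complex.I * y) = Complex.I * (-x / y) := by
  rw [div_mul_eq_div_div_swap, Complex.div_I]; ring

private lemma cos_exp_int' (ω : ℝ) (z : ℂ) (h1 : z + ω ≠ 0) (h2 : z - ω ≠ 0) (b : ℝ) :
    ∫ τ in (0:ℝ)..b, (Real.cos (ω * τ) : ℂ) * Complex.exp (Complex.I * z * τ)
      = (Complex.exp (Complex.I * (z + ω) * b) - 1) / (Complex.I * (z + ω)) / 2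
        + (Complex.exp (Complex.I * (z - ω) * b) - 1) / (Complex.I * (z - ω)) / 2 := by
  have hI := Complex.I_ne_zero
  have key : ∀ τ : ℝ, (Real.cos (ω * τ) : ℂ) * Complex.exp (Complex.I * z * τ)
      = Complex.exp (Complex.I * (z + ω) * τ) / 2 + Complex.exp (Complex.I * (z - ω) * τ) / 2 := by
    intro τ
    rw [Complex.ofReal_cos, Complex.cos]
    have e1 : Complex.exp (((ω : ℂ) * τ) * Complex.I) * Complex.exp (Complex.I * z * τ)
        = Complex.exp (Complex.I * (z + ω) * τ) := by
      rw [← Complex.exp_add]; congr 1; ring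
    have e2 : Complex.exp ((-((ω : ℂ) * τ)) * Complex.I) * Complex.exp (Complex.I * z * τ)
        = Complex.exp (Complex.I * (z - ω) * τ) := by
      rw [← Complex.exp_add]; congr 1; ring
    push_cast
    rw [div_mul_eq_mul_div, add_mul, e1, e2]
    ring
  rw [intervalIntegral.integral_congr (fun τ _ => key τ)]
  rw [intervalIntegral.integral_add, intervalIntegral.integral_div, intervalIntegral.integral_div,
      exp_int' _ (mul_ne_zero hI h1), exp_int' _ (mul_ne_zero hI h2)]
  · exact ((Complex.continuous_exp.comp (by continuity)).intervalIntegrable 0 b).div_const 2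
  · exact ((Complex.continuous_exp.comp (by continuity)).intervalIntegrable 0 b).div_const 2

private lemma per_n' (τm : ℝ) (hτm : τm ≠ 0) (n : ℕ) (z : ℂ)
    (h1 : z + (((n:ℝ)*π/τm : ℝ) : ℂ) ≠ 0) (h2 : z - (((n:ℝ)*π/τm : ℝ) : ℂ) ≠ 0)
    (hD : (n:ℂ)^2*(π:ℂ)^2 - (τm:ℂ)^2*z^2 ≠ 0) :
    (Complex.exp (Complex.I*(z + (((n:ℝ)*π/τm:ℝ):ℂ))*τm) - 1)/(Complex.I*(z + (((n:ℝ)*π/τm:ℝ):ℂ)))/2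
      + (Complex.exp (Complex.I*(z - (((n:ℝ)*π/τm:ℝ):ℂ))*τm) - 1)/(Complex.I*(z - (((n:ℝ)*π/τm:ℝ):ℂ)))/2
    = Complex.I*(τm:ℂ)^2*z*((-1)^n * Complex.exp (Complex.I*τm*z) - 1)/((n:ℂ)^2*(π:ℂ)^2 - (τm:ℂ)^2*z^2) := by
  have hτc : (τm:ℂ) ≠ 0 := Complex.ofReal_ne_zero.mpr hτm
  have hwc : (((n:ℝ)*π/τm:ℝ):ℂ) = (n:ℂ)*(π:ℂ)/(τm:ℂ) := by push_cast; ring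
  set w : ℂ := (n:ℂ)*(π:ℂ)/(τm:ℂ) with hw
  rw [hwc] at h1 h2 ⊢
  have s1 : Complex.exp (Complex.I*(z + w)*τm) = (-1)^n * Complex.exp (Complex.I*τm*z) := by
    have harg : Complex.I*(z + w)*(τm:ℂ) = (n:ℂ)*((π:ℂ)*Complex.I) + Complex.I*(τm:ℂ)*z := by
      rw [hw]; field_simp; ring
    rw [harg, Complex.exp_add, Complex.exp_nat_mul, Complex.exp_pi_mul_I]
  have s2 : Complex.exp (Complex.I*(z - w)*τm) = (-1)^n * Complex.exp (Complex.I*τm*z) := by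
    have harg : Complex.I*(z - w)*(τm:ℂ) = -((n:ℂ)*((π:ℂ)*Complex.I)) + Complex.I*(τm:ℂ)*z := by
      rw [hw]; field_simp; ring
    rw [harg, Complex.exp_add, Complex.exp_neg, Complex.exp_nat_mul, Complex.exp_pi_mul_I,
      show ((-1:ℂ)^n)⁻¹ = (-1)^n from by rw [← inv_pow, inv_neg, inv_one]]
  rw [s1, s2, hdiv', hdiv']
  set E := Complex.exp (Complex.I*(τm:ℂ)*z) with hE
  have key : (-((-1)^n * E - 1)/(z+w))/2 + (-((-1)^n * E - 1)/(z-w))/2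
      = (τm:ℂ)^2*z*((-1)^n * E - 1)/((n:ℂ)^2*(π:ℂ)^2 - (τm:ℂ)^2*z^2) := by
    have h1' : (τm:ℂ)*z + (n:ℂ)*(π:ℂ) ≠ 0 := by
      intro h; exact h1 (by rw [hw]; field_simp; linear_combination h)
    have h2' : (τm:ℂ)*z - (n:ℂ)*(π:ℂ) ≠ 0 := by
      intro h; exact h2 (by rw [hw]; field_simp; linear_combination h)
    set u : ℂ := (-1)^n * E - 1 with hu
    have e1 : z + w = ((τm:ℂ)*z + (n:ℂ)*(π:ℂ))/(τm:ℂ) := by rw [hw]; field_simp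
    have e2 : z - w = ((τm:ℂ)*z - (n:ℂ)*(π:ℂ))/(τm:ℂ) := by rw [hw]; field_simp
    rw [e1, e2, div_div_eq_mul_div, div_div_eq_mul_div]
    rw [div_div, div_div, div_add_div _ _ (mul_ne_zero h1' two_ne_zero) (mul_ne_zero h2' two_ne_zero),
      div_eq_div_iff (mul_ne_zero (mul_ne_zero h1' two_ne_zero) (mul_ne_zero h2' two_ne_zero)) hD]
    ring
  calc Complex.I * (-((-1)^n * E - 1)/(z+w))/2 + Complex.I * (-((-1)^n * E - 1)/(z-w))/2
      = Complex.I * ((-((-1)^n * E - 1)/(z+w))/2 + (-((-1)^n * E - 1)/(z-w))/2) := by ring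
    _ = Complex.I * ((τm:ℂ)^2*z*((-1)^n * E - 1)/((n:ℂ)^2*(π:ℂ)^2 - (τm:ℂ)^2*z^2)) := by rw [key]
    _ = _ := by ring

theorem truncated_fourier_integral_eval (τm : ℝ) (hτm : 0 < τm) (N : ℕ) (a : ℕ → ℝ)
    (ha : ∀ n : ℕ, a n = (2 * Real.sqrt π / τm) * Real.exp (-(n : ℝ) ^ 2 * π ^ 2 / τm ^ 2))
    (z : ℂ) (hz : ∀ n ≤ N, (n : ℂ) ^ 2 * (π : ℂ) ^ 2 ≠ (τm : ℂ) ^ 2 * z ^ 2) :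
    (1 / (Real.sqrt π : ℂ)) *
      ∫ τ in (0:ℝ)..τm,
        ((-(a 0) / 2 +
            ∑ n ∈ Finset.range (N + 1), a n * Real.cos (n * π * τ / τm) : ℝ) : ℂ) *
          Complex.exp (Complex.I * z * τ) =
      Complex.I * (1 - Complex.exp (Complex.I * (τm : ℂ) * z)) / ((τm : ℂ) * z) +
        (Complex.I * (τm : ℂ) ^ 2 * z / (Real.sqrt π : ℂ)) *
          ∑ n ∈ Finset.Icc 1 N,
            (a n : ℂ) * ((-1) ^ n * Complex.exp (Complex.I * (τm : ℂ) * z) - 1) /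
              ((n : ℂ) ^ 2 * (π : ℂ) ^ 2 - (τm : ℂ) ^ 2 * z ^ 2) := by
  have hπ : (0:ℝ) < π := Real.pi_pos
  have hsπ : (Real.sqrt π : ℂ) ≠ 0 := by
    simp only [ne_eq, Complex.ofReal_eq_zero]
    positivity
  have hτ0 : (τm:ℂ) ≠ 0 := Complex.ofReal_ne_zero.mpr hτm.ne'
  have hz0 : z ≠ 0 := by
    intro h
    exact hz 0 (Nat.zero_le N) (by simp [h])
  have hIz : Complex.I * z ≠ 0 := mul_ne_zero Complex.I_ne_zero hz0
  have h1 : ∀ n ≤ N, z + (((n:ℝ)*π/τm : ℝ):ℂ) ≠ 0 := by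
    intro n hn h
    apply hz n hn
    have hzeq : z = -(((n:ℝ)*π/τm : ℝ):ℂ) := by linear_combination h
    rw [hzeq]
    push_cast
    field_simp
  have h2 : ∀ n ≤ N, z - (((n:ℝ)*π/τm : ℝ):ℂ) ≠ 0 := by
    intro n hn h
    apply hz n hn
    have hzeq : z = (((n:ℝ)*π/τm : ℝ):ℂ) := by linear_combination h
    rw [hzeq]
    push_cast
    field_simp
  set E := Complex.exp (Complex.I * (τm:ℂ) * z) with hEdef
  have hE' : Complex.exp (Complex.I * z * (τm:ℂ)) = E := by rw [hEdef]; ring_nf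
  -- rewrite the integrand
  have hint : ∀ τ : ℝ, ((-(a 0) / 2 +
            ∑ n ∈ Finset.range (N + 1), a n * Real.cos (n * π * τ / τm) : ℝ) : ℂ) *
          Complex.exp (Complex.I * z * τ)
      = (-(a 0 : ℂ)/2) * Complex.exp (Complex.I * z * τ)
        + ∑ n ∈ Finset.range (N+1),
            (a n : ℂ) * ((Real.cos ((n:ℝ)*π/τm * τ) : ℂ) * Complex.exp (Complex.I * z * τ)) := by
    intro τ
    have harg : ∀ n : ℕ, (n:ℝ) * π * τ / τm = (n:ℝ)*π/τm * τ := fun n => by ring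
    simp only [harg]
    rw [Complex.ofReal_add, add_mul, Complex.ofReal_sum, Finset.sum_mul]
    congr 1
    · push_cast; ring
    · exact Finset.sum_congr rfl fun n _ => by push_cast; ring
  rw [intervalIntegral.integral_congr (fun τ _ => hint τ)]
  have hcont : ∀ n : ℕ, Continuous fun τ:ℝ =>
      (a n : ℂ) * ((Real.cos ((n:ℝ)*π/τm * τ) : ℂ) * Complex.exp (Complex.I * z * τ)) := by
    intro n
    fun_prop
  have hc0 : Continuous fun τ:ℝ => (-(a 0:ℂ)/2) * Complex.exp (Complex.I * z * τ) := by fun_prop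
  rw [intervalIntegral.integral_add (hc0.intervalIntegrable 0 τm)
    ((continuous_finset_sum _ fun n _ => hcont n).intervalIntegrable 0 τm)]
  rw [intervalIntegral.integral_finset_sum (fun n _ => (hcont n).intervalIntegrable 0 τm)]
  rw [intervalIntegral.integral_const_mul, exp_int' _ hIz]
  have hterm : ∀ n ∈ Finset.range (N+1),
      ∫ τ in (0:ℝ)..τm, (a n : ℂ) * ((Real.cos ((n:ℝ)*π/τm * τ) : ℂ) * Complex.exp (Complex.I * z * τ))
      = (a n : ℂ) * (Complex.I*(τm:ℂ)^2*z*((-1)^n * E - 1)/((n:ℂ)^2*(π:ℂ)^2 - (τm:ℂ)^2*z^2)) := by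
    intro n hn
    have hn' : n ≤ N := Nat.lt_succ_iff.mp (Finset.mem_range.mp hn)
    rw [intervalIntegral.integral_const_mul, cos_exp_int' _ _ (h1 n hn') (h2 n hn'),
      per_n' τm hτm.ne' n z (h1 n hn') (h2 n hn') (sub_ne_zero.mpr (hz n hn'))]
  rw [Finset.sum_congr rfl hterm]
  have hsplit : Finset.range (N+1) = insert 0 (Finset.Icc 1 N) := by
    ext x; simp [Nat.lt_succ_iff]; omega
  rw [hsplit, Finset.sum_insert (by simp)]
  have ha0 : (a 0 : ℂ) = 2*(Real.sqrt π : ℂ)/(τm:ℂ) := by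
    have : a 0 = 2 * Real.sqrt π / τm := by rw [ha 0]; norm_num
    rw [this]; push_cast; ring
  have hS : (1/(Real.sqrt π:ℂ)) *
      ∑ n ∈ Finset.Icc 1 N, (a n : ℂ) * (Complex.I*(τm:ℂ)^2*z*((-1)^n * E - 1)/((n:ℂ)^2*(π:ℂ)^2 - (τm:ℂ)^2*z^2))
      = (Complex.I * (τm:ℂ)^2 * z / (Real.sqrt π : ℂ)) *
          ∑ n ∈ Finset.Icc 1 N, (a n : ℂ) * ((-1)^n * E - 1) / ((n:ℂ)^2*(π:ℂ)^2 - (τm:ℂ)^2*z^2) := by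
    rw [Finset.mul_sum, Finset.mul_sum]
    exact Finset.sum_congr rfl fun n _ => by ring
  have hz0term : (a 0 : ℂ) * (Complex.I*(τm:ℂ)^2*z*((-1)^0 * E - 1)/(((0:ℕ):ℂ)^2*(π:ℂ)^2 - (τm:ℂ)^2*z^2))
      = (a 0 : ℂ) * ((E - 1)/(Complex.I * z)) := by
    rw [hdiv']
    push_cast
    have : ((0:ℂ)^2*(π:ℂ)^2 - (τm:ℂ)^2*z^2) = -((τm:ℂ)*z)^2 := by ring
    rw [this]
    field_simp
  rw [hE', hz0term, hdiv']
  have hfirst : (1/(Real.sqrt π:ℂ)) * ((-(a 0:ℂ)/2) * (Complex.I * (-(E-1)/z)) + (a 0:ℂ) * (Complex.I * (-(E-1)/z)))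
      = Complex.I * (1 - E) / ((τm:ℂ) * z) := by
    rw [ha0]
    have step : (1/(Real.sqrt π:ℂ))*((-(2*(Real.sqrt π:ℂ)/(τm:ℂ))/2)*(Complex.I*(-(E-1)/z))
          + (2*(Real.sqrt π:ℂ)/(τm:ℂ))*(Complex.I*(-(E-1)/z)))
        = ((Real.sqrt π:ℂ)*(Complex.I*(1-E)))/((Real.sqrt π:ℂ)*((τm:ℂ)*z)) := by ring
    rw [step]
    exact mul_div_mul_left _ _ hsπ
  calc (1/(Real.sqrt π:ℂ)) * ((-(a 0:ℂ)/2) * (Complex.I * (-(E-1)/z))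
          + ((a 0 : ℂ) * (Complex.I * (-(E-1)/z))
            + ∑ n ∈ Finset.Icc 1 N, (a n : ℂ) * (Complex.I*(τm:ℂ)^2*z*((-1)^n * E - 1)/((n:ℂ)^2*(π:ℂ)^2 - (τm:ℂ)^2*z^2))))
      = (1/(Real.sqrt π:ℂ)) * ((-(a 0:ℂ)/2) * (Complex.I * (-(E-1)/z)) + (a 0:ℂ) * (Complex.I * (-(E-1)/z)))
        + (1/(Real.sqrt π:ℂ)) * ∑ n ∈ Finset.Icc 1 N, (a n : ℂ) * (Complex.I*(τm:ℂ)^2*z*((-1)^n * E - 1)/((n:ℂ)^2*(π:ℂ)^2 - (τm:ℂ)^2*z^2)) := by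
        ring
    _ = _ := by rw [hfirst, hS]
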